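/- Somos' constant σ = Π_{i=1}^∞ i^{1/2^i} satisfies σ = 2 · exp(-γ(1/2)/2), where γ(z) = Σ_{i=1}^∞ z^{i-1}(1/i - log((i+1)/i)). -/

import Mathlib

/-- Somos' constant `σ = ∏_{i=1}^∞ i^{1/2^i}`. -/
noncomputable def somos : ℝ := ∏' i : ℕ, ((i : ℝ) + 1) ^ (((2:ℝ) ^ (i + 1))⁻¹)

noncomputable def eulerGamma (z : ℝ) : ℝ :=
  ∑' i : ℕ, z ^ i * (((i : ℝ) + 1)⁻¹ - Real.log (((i : ℝ) + 2) / ((i : ℝ) + 1)))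

private noncomputable def somosG (i : ℕ) : ℝ := (2:ℝ)⁻¹ ^ i * Real.log ((i : ℝ) + 1)

private lemma somosG_summable : Summable somosG := by
  have hb : Summable (fun n : ℕ => (n : ℝ) ^ 1 * (2:ℝ)⁻¹ ^ n) :=
    summable_pow_mul_geometric_of_norm_lt_one 1 (by rw [Real.norm_eq_abs]; rw [abs_of_pos] <;> norm_num)
  refine hb.of_nonneg_of_le (fun i => ?_) (fun i => ?_)
  · exact mul_nonneg (by positivity) (Real.log_nonneg (by linarith))
  · rw [pow_one, somosG, mul_comm]
    gcongr
    have := Real.log_le_sub_one_of_pos (x := (i:ℝ) + 1) (by positivity)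
    linarith

/-- `σ = 2 exp(-γ(1/2)/2)`. -/
theorem somos_eq_exp_eulerGamma :
    somos = 2 * Real.exp (-(eulerGamma (2:ℝ)⁻¹) / 2) := by
  set S : ℝ := ∑' i, somosG i with hS
  have hgsum : HasSum somosG S := somosG_summable.hasSum
  -- somos = exp (S/2)
  have hsomos : somos = Real.exp (S / 2) := by
    have h1 : HasSum (fun i : ℕ => (2:ℝ)⁻¹ * somosG i) (2⁻¹ * S) := hgsum.mul_left _
    have h2 := h1.rexp.tprod_eq
    rw [somos, div_eq_inv_mul, ← h2]
    congr 1
    funext i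
    rw [Function.comp_apply, Real.rpow_def_of_pos (by positivity)]
    congr 1
    rw [somosG, ← inv_pow]
    ring
  -- first piece: ∑ 2⁻¹^i * (i+1)⁻¹ = 2 * log 2
  have hlog : HasSum (fun i : ℕ => (2:ℝ)⁻¹ ^ i * ((i : ℝ) + 1)⁻¹) (2 * Real.log 2) := by
    have h := (Real.hasSum_pow_div_log_of_abs_lt_one
      (x := (2:ℝ)⁻¹) (by rw [abs_of_pos]; norm_num; norm_num)).mul_left 2
    have e1 : -Real.log (1 - (2:ℝ)⁻¹) = Real.log 2 := by
      norm_num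
      rw [← Real.log_inv]
      norm_num
    rw [e1] at h
    convert h using 2 with i
    · rfl
    rw [pow_succ]
    field_simp
  -- second piece: ∑ 2⁻¹^i * log((i+2)/(i+1)) = S
  have hshift : HasSum (fun i : ℕ => somosG (i + 1)) S := by
    rw [hasSum_nat_add_iff 1]
    simpa [somosG] using hgsum
  have hlog2 : HasSum (fun i : ℕ =>
      (2:ℝ)⁻¹ ^ i * Real.log (((i : ℝ) + 2) / ((i : ℝ) + 1))) S := by
    have h2 : HasSum (fun i : ℕ => 2 * somosG (i + 1)) (2 * S) := hshift.mul_left 2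
    have h3 := h2.sub hgsum
    have : 2 * S - S = S := by ring
    rw [this] at h3
    convert h3 using 2 with i
    · rfl
    rw [somosG, somosG, Real.log_div (by positivity) (by positivity), pow_succ]
    push_cast
    ring
  -- eulerGamma 2⁻¹ = 2 log 2 - S
  have hgamma : eulerGamma (2:ℝ)⁻¹ = 2 * Real.log 2 - S := by
    rw [eulerGamma]
    have h := hlog.sub hlog2
    rw [← h.tsum_eq]
    congr 1
    funext i
    ring
  rw [hsomos, hgamma]
  rw [show -(2 * Real.log 2 - S) / 2 = S / 2 + -Real.log 2 by ring]
  rw [Real.exp_add, Real.exp_neg, Real.exp_log (by norm_num)]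
  ring
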